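/- Let H ∈ G_{n,i} for some i ∈ {1,…,n−1}, ◇ : 𝒦ⁿₙ → 𝒦ⁿ_H a monotonic map invariant on H-symmetric spherical cylinders, and suppose there exists a strictly increasing set function F : 𝒦ⁿₙ ∪ 𝒦ⁿ_H → [0,∞) with F(◇K) = F(K) for all convex bodies K. Then ◇ is projection invariant: (◇K)|H = K|H for all convex bodies K. -/

import Mathlib

open Set MeasureTheory Metric Pointwise

noncomputable section

/-- Euclidean space `ℝⁿ`. -/
abbrev Euc (n : ℕ) := EuclideanSpace ℝ (Fin n)

/-- The orthogonal projection onto `H`, as a self-map `x ↦ x|H` of the ambient space. -/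
def projS {n : ℕ} (H : Submodule ℝ (Euc n)) (x : Euc n) : Euc n :=
  (Submodule.orthogonalProjection H x : Euc n)

/-- The reflection with respect to the subspace `H` : `x ↦ 2(x|H) − x`. -/
def reflS {n : ℕ} (H : Submodule ℝ (Euc n)) (x : Euc n) : Euc n :=
  (2 : ℝ) • projS H x - x

/-- `A` is symmetric with respect to the subspace `H`. -/
def SymmWrt {n : ℕ} (H : Submodule ℝ (Euc n)) (A : Set (Euc n)) : Prop :=
  reflS H '' A = A

/-- The orthogonal projection `A|H` of a set `A` onto `H`. -/
def pimg {n : ℕ} (H : Submodule ℝ (Euc n)) (A : Set (Euc n)) : Set (Euc n) :=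
  projS H '' A

/-- The `H`-symmetric spherical cylinder `(r(B∩H)+x)+s(B∩H^⊥)`. -/
def cylSet {n : ℕ} (H : Submodule ℝ (Euc n)) (r s : ℝ) (x : Euc n) : Set (Euc n) :=
  (fun y => x + y) '' (r • (closedBall (0 : Euc n) 1 ∩ (H : Set (Euc n)))
    + s • (closedBall (0 : Euc n) 1 ∩ ((Hᗮ : Submodule ℝ (Euc n)) : Set (Euc n))))

/-- Convex bodies of `ℝⁿ`: compact convex sets with nonempty interior. -/
abbrev FullBody (n : ℕ) := {K : ConvexBody (Euc n) // (interior (K : Set (Euc n))).Nonempty}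

/-- `L` is a convex body in the subspace `H`: a compact convex subset of `H` with
nonempty interior relative to `H`. -/
def IsBodyIn {n : ℕ} (H : Submodule ℝ (Euc n)) (L : Set (Euc n)) : Prop :=
  L ⊆ (H : Set (Euc n)) ∧ IsCompact L ∧ Convex ℝ L ∧
    (interior (((↑) : H → Euc n) ⁻¹' L)).Nonempty

/-- Sets of special form: `L + s(B ∩ H^⊥)` with `L` a convex body in `H` and `s > 0`. -/
def SpecialForm {n : ℕ} (H : Submodule ℝ (Euc n)) (T : Set (Euc n)) : Prop :=
  ∃ (L : Set (Euc n)) (s : ℝ), IsBodyIn H L ∧ 0 < s ∧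
    T = L + s • (closedBall (0 : Euc n) 1 ∩ ((Hᗮ : Submodule ℝ (Euc n)) : Set (Euc n)))

/-- `K` belongs to `𝒦ⁿₙ ∪ 𝒦ⁿ_H`: it has nonempty interior or is `H`-symmetric. -/
def InDom {n : ℕ} (H : Submodule ℝ (Euc n)) (K : ConvexBody (Euc n)) : Prop :=
  (interior (K : Set (Euc n))).Nonempty ∨ SymmWrt H (K : Set (Euc n))

section Aux

open scoped InnerProductSpace

variable {n : ℕ} (H : Submodule ℝ (Euc n))

lemma projS_mem (x : Euc n) : projS H x ∈ H := SetLike.coe_mem _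

lemma projS_eq_self {x : Euc n} (hx : x ∈ H) : projS H x = x :=
  Submodule.starProjection_eq_self_iff.2 hx

lemma projS_eq_zero {x : Euc n} (hx : x ∈ Hᗮ) : projS H x = 0 := by
  unfold projS
  rw [Submodule.orthogonalProjectionOnto_apply_of_mem_orthogonal hx]
  rfl

lemma projS_add (x y : Euc n) : projS H (x + y) = projS H x + projS H y := by
  unfold projS; rw [map_add]; rfl

lemma sub_projS_mem_orthogonal (x : Euc n) : x - projS H x ∈ Hᗮ :=
  Submodule.sub_starProjection_mem_orthogonal x

lemma continuous_projS : Continuous (projS H) :=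
  continuous_subtype_val.comp (Submodule.orthogonalProjection H).continuous

/-- `projS` as a linear map. -/
def projL : Euc n →ₗ[ℝ] Euc n :=
  H.subtype.comp (Submodule.orthogonalProjection H).toLinearMap

lemma projL_eq (x : Euc n) : projL H x = projS H x := rfl

lemma norm_projS_le (x : Euc n) : ‖projS H x‖ ≤ ‖x‖ := by
  have h1 := (Submodule.orthogonalProjection H).le_opNorm x
  have h2 : ‖(Submodule.orthogonalProjection H : Euc n →L[ℝ] H)‖ ≤ 1 := Submodule.orthogonalProjectionOnto_norm_le H
  have h3 : ‖projS H x‖ = ‖Submodule.orthogonalProjection H x‖ := rfl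
  nlinarith [norm_nonneg x]

lemma norm_sub_projS_le (x : Euc n) : ‖x - projS H x‖ ≤ ‖x‖ := by
  have h0 : ⟪projS H x, x - projS H x⟫_ℝ = 0 :=
    Submodule.inner_right_of_mem_orthogonal (projS_mem H x) (sub_projS_mem_orthogonal H x)
  have h1 : ‖x‖ ^ 2 = ‖projS H x‖ ^ 2 + ‖x - projS H x‖ ^ 2 := by
    have h2 := norm_add_sq_real (projS H x) (x - projS H x)
    rw [h0] at h2
    have h3 : projS H x + (x - projS H x) = x := by abel
    rw [h3] at h2
    linarith
  nlinarith [norm_nonneg (x - projS H x), norm_nonneg x, norm_nonneg (projS H x)]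

lemma pimg_subset_coe {A : Set (Euc n)} : pimg H A ⊆ (H : Set (Euc n)) := by
  rintro q ⟨y, -, rfl⟩; exact projS_mem H y

lemma pimg_mono {A B : Set (Euc n)} (h : A ⊆ B) : pimg H A ⊆ pimg H B :=
  Set.image_mono h

lemma mem_smul_ball_inter (H' : Submodule ℝ (Euc n)) {r : ℝ} (hr : 0 < r) {a : Euc n} :
    a ∈ r • (closedBall (0 : Euc n) 1 ∩ (H' : Set (Euc n))) ↔ ‖a‖ ≤ r ∧ a ∈ H' := by
  constructor
  · rintro ⟨y, ⟨hy1, hy2⟩, rfl⟩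
    rw [mem_closedBall_zero_iff] at hy1
    refine ⟨?_, H'.smul_mem r hy2⟩
    rw [norm_smul, Real.norm_eq_abs, abs_of_pos hr]
    nlinarith
  · rintro ⟨h1, h2⟩
    refine ⟨r⁻¹ • a, ⟨?_, H'.smul_mem r⁻¹ h2⟩, by show r • r⁻¹ • a = a; rw [smul_inv_smul₀ hr.ne']⟩
    rw [mem_closedBall_zero_iff, norm_smul, Real.norm_eq_abs, abs_of_pos (inv_pos.2 hr)]
    rw [inv_mul_le_iff₀ hr]
    linarith

lemma mem_cylSet_iff {r s : ℝ} (hr : 0 < r) (hs : 0 < s) (x y : Euc n) :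
    y ∈ cylSet H r s x ↔
      ∃ a b : Euc n, a ∈ H ∧ ‖a‖ ≤ r ∧ b ∈ Hᗮ ∧ ‖b‖ ≤ s ∧ y = x + (a + b) := by
  unfold cylSet
  rw [Set.mem_image]
  constructor
  · rintro ⟨z, hz, rfl⟩
    rw [Set.mem_add] at hz
    obtain ⟨a, ha, b, hb, rfl⟩ := hz
    rw [mem_smul_ball_inter H hr] at ha
    rw [mem_smul_ball_inter Hᗮ hs] at hb
    exact ⟨a, b, ha.2, ha.1, hb.2, hb.1, rfl⟩
  · rintro ⟨a, b, ha1, ha2, hb1, hb2, rfl⟩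
    refine ⟨a + b, ?_, rfl⟩
    rw [Set.mem_add]
    exact ⟨a, (mem_smul_ball_inter H hr).2 ⟨ha2, ha1⟩,
      b, (mem_smul_ball_inter Hᗮ hs).2 ⟨hb2, hb1⟩, rfl⟩

lemma cylSet_exists_fullBody {r s : ℝ} (hr : 0 < r) (hs : 0 < s) (x : Euc n) :
    ∃ C : FullBody n, (C.1 : Set (Euc n)) = cylSet H r s x := by
  have hA : IsCompact (r • (closedBall (0 : Euc n) 1 ∩ (H : Set (Euc n)))) := by
    rw [← Set.image_smul]
    exact (((isCompact_closedBall _ _).inter_right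
      (Submodule.closed_of_finiteDimensional H))).image (continuous_const_smul r)
  have hB : IsCompact (s • (closedBall (0 : Euc n) 1 ∩ ((Hᗮ : Submodule ℝ (Euc n)) : Set (Euc n)))) := by
    rw [← Set.image_smul]
    exact (((isCompact_closedBall _ _).inter_right
      (Submodule.closed_of_finiteDimensional Hᗮ))).image (continuous_const_smul s)
  have hcomp : IsCompact (cylSet H r s x) := by
    unfold cylSet
    exact (hA.add hB).image (continuous_const.add continuous_id)
  have hconv : Convex ℝ (cylSet H r s x) := by
    unfold cylSet
    refine Convex.translate ?_ x
    exact Convex.add (((convex_closedBall _ _).inter H.convex).smul r)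
      (((convex_closedBall _ _).inter Hᗮ.convex).smul s)
  have hne : (cylSet H r s x).Nonempty := by
    refine ⟨x, (mem_cylSet_iff H hr hs x x).2 ⟨0, 0, H.zero_mem, ?_, Hᗮ.zero_mem, ?_, by simp⟩⟩
    · simp [hr.le]
    · simp [hs.le]
  have hint : (interior (cylSet H r s x)).Nonempty := by
    have hball : ball x (min r s) ⊆ cylSet H r s x := by
      intro y hy
      rw [mem_ball, dist_eq_norm] at hy
      refine (mem_cylSet_iff H hr hs x y).2
        ⟨projS H (y - x), (y - x) - projS H (y - x), projS_mem H _, ?_, sub_projS_mem_orthogonal H _, ?_, by abel⟩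
      · exact le_trans (norm_projS_le H _) (le_trans hy.le (min_le_left _ _))
      · exact le_trans (norm_sub_projS_le H _) (le_trans hy.le (min_le_right _ _))
    refine ⟨x, ?_⟩
    have : ball x (min r s) ⊆ interior (cylSet H r s x) :=
      interior_maximal hball isOpen_ball
    exact this (mem_ball_self (lt_min hr hs))
  exact ⟨⟨⟨cylSet H r s x, hconv, hcomp, hne⟩, hint⟩, rfl⟩

lemma pimg_cylSet_subset {r s : ℝ} (hr : 0 < r) (hs : 0 < s) {x : Euc n} (hx : x ∈ H) :
    pimg H (cylSet H r s x) ⊆ {q : Euc n | ‖q - x‖ ≤ r} := by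
  rintro q ⟨y, hy, rfl⟩
  obtain ⟨a, b, ha1, ha2, hb1, hb2, rfl⟩ := (mem_cylSet_iff H hr hs x y).1 hy
  have : projS H (x + (a + b)) = x + a := by
    rw [projS_add, projS_add, projS_eq_self H hx, projS_eq_self H ha1, projS_eq_zero H hb1,
      add_zero]
  rw [this]
  simpa using ha2

end Aux

section Main

open scoped InnerProductSpace

variable {n : ℕ} {H : Submodule ℝ (Euc n)}

/-- Part 1: the shadow of the image is contained in the shadow of the body. -/
lemma shadow_subset
    (dia : FullBody n → ConvexBody (Euc n))
    (hmono : ∀ K L : FullBody n,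
      (K.1 : Set (Euc n)) ⊆ (L.1 : Set (Euc n)) → (dia K : Set (Euc n)) ⊆ (dia L : Set (Euc n)))
    (hcyl : ∀ (C : FullBody n) (r s : ℝ) (x : Euc n), 0 < r → 0 < s → x ∈ H →
      (C.1 : Set (Euc n)) = cylSet H r s x → (dia C : Set (Euc n)) = (C.1 : Set (Euc n)))
    (X : FullBody n) : pimg H (dia X : Set (Euc n)) ⊆ pimg H (X.1 : Set (Euc n)) := by
  intro q hq
  by_contra hqP
  have hqH : q ∈ H := pimg_subset_coe H hq
  set P : Set (Euc n) := pimg H (X.1 : Set (Euc n)) with hP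
  have hPconv : Convex ℝ P := by
    have : P = projL H '' (X.1 : Set (Euc n)) := rfl
    rw [this]
    exact (X.1.convex).linear_image (projL H)
  have hPcomp : IsCompact P := (X.1.isCompact).image (continuous_projS H)
  have hPne : P.Nonempty := (X.1.nonempty).image _
  obtain ⟨f, u, hfu, hufq⟩ := geometric_hahn_banach_closed_point hPconv hPcomp.isClosed hqP
  set v : Euc n := (InnerProductSpace.toDual ℝ (Euc n)).symm f with hv
  set w : Euc n := projS H v with hwdef
  have hw_eq : ∀ y, y ∈ H → ⟪w, y⟫_ℝ = f y := by
    intro y hy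
    have h0 : ⟪v - w, y⟫_ℝ = 0 :=
      Submodule.inner_left_of_mem_orthogonal hy (sub_projS_mem_orthogonal H v)
    have h1 : ⟪v, y⟫_ℝ = f y := InnerProductSpace.toDual_symm_apply
    have h2 : ⟪v - w, y⟫_ℝ = ⟪v, y⟫_ℝ - ⟪w, y⟫_ℝ := inner_sub_left v w y
    linarith
  have hwH : w ∈ H := projS_mem H v
  have hfy : ∀ y ∈ P, ⟪w, y⟫_ℝ < u := by
    intro y hy
    rw [hw_eq y (pimg_subset_coe H hy)]
    exact hfu y hy
  have hfq : u < ⟪w, q⟫_ℝ := by rw [hw_eq q hqH]; exact hufq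
  -- a bound for X and q
  obtain ⟨ρ₀, hρ₀⟩ := (X.1.isCompact.isBounded).subset_closedBall (0 : Euc n)
  set ρ : ℝ := max ρ₀ ‖q‖ + 1 with hρdef
  have hρpos : 0 < ρ := by
    have : (0:ℝ) ≤ ‖q‖ := norm_nonneg q
    have h := le_max_right ρ₀ ‖q‖
    linarith
  have hXρ : ∀ x ∈ (X.1 : Set (Euc n)), ‖x‖ ≤ ρ := by
    intro x hx
    have := hρ₀ hx
    rw [mem_closedBall, dist_zero_right] at this
    have h := le_max_left ρ₀ ‖q‖
    linarith
  have hqρ : ‖q‖ ≤ ρ := by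
    have h := le_max_right ρ₀ ‖q‖
    linarith
  have hPρ : ∀ y ∈ P, ‖y‖ ≤ ρ := by
    rintro y ⟨x, hx, rfl⟩
    exact le_trans (norm_projS_le H x) (hXρ x hx)
  set β : ℝ := ⟪w, q⟫_ℝ - u with hβdef
  have hβpos : 0 < β := by simp only [hβdef]; linarith
  set R : ℝ := (ρ ^ 2 + 1) / (2 * β) with hRdef
  have hRpos : 0 < R := by positivity
  set x₀ : Euc n := -(R • w) with hx₀def
  have hx₀H : x₀ ∈ H := H.neg_mem (H.smul_mem R hwH)
  set N : ℝ := ρ ^ 2 + 2 * R * u + R ^ 2 * ‖w‖ ^ 2 with hNdef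
  have hnormsq : ∀ y : Euc n, ‖y - x₀‖ ^ 2 = ‖y‖ ^ 2 + 2 * R * ⟪w, y⟫_ℝ + R ^ 2 * ‖w‖ ^ 2 := by
    intro y
    have h1 : y - x₀ = y + R • w := by rw [hx₀def]; abel
    rw [h1, norm_add_sq_real]
    rw [real_inner_smul_right, norm_smul, Real.norm_eq_abs, abs_of_pos hRpos]
    rw [real_inner_comm y w]
    ring
  have hyN : ∀ y ∈ P, ‖y - x₀‖ ^ 2 ≤ N := by
    intro y hy
    rw [hnormsq y, hNdef]
    have h1 := hfy y hy
    have h2 := hPρ y hy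
    nlinarith [norm_nonneg y]
  have hN0 : 0 ≤ N := by
    obtain ⟨y, hy⟩ := hPne
    exact le_trans (sq_nonneg ‖y - x₀‖) (hyN y hy)
  have hqN : N < ‖q - x₀‖ ^ 2 := by
    rw [hnormsq q, hNdef]
    have h2Rβ : 2 * R * β = ρ ^ 2 + 1 := by
      rw [hRdef]; field_simp
    have : ⟪w, q⟫_ℝ = u + β := by rw [hβdef]; ring
    rw [this]
    nlinarith [sq_nonneg ‖q‖]
  set r₀ : ℝ := Real.sqrt N with hr₀def
  set d : ℝ := ‖q - x₀‖ with hddef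
  have hd0 : 0 ≤ d := norm_nonneg _
  have hr₀0 : 0 ≤ r₀ := Real.sqrt_nonneg N
  have hr₀d : r₀ < d := by
    have hdpos : 0 < d := by
      rcases eq_or_lt_of_le hd0 with h | h
      · exfalso
        have h2 : N < d ^ 2 := by rw [hddef]; exact hqN
        rw [← h] at h2
        simp at h2
        linarith
      · exact h
    rw [hr₀def]
    rw [show d = Real.sqrt (d ^ 2) by rw [Real.sqrt_sq hd0]]
    exact Real.sqrt_lt_sqrt hN0 hqN
  set r' : ℝ := (r₀ + d) / 2 with hr'def
  have hr'pos : 0 < r' := by rw [hr'def]; linarith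
  have hr'd : r' < d := by rw [hr'def]; linarith
  have hr₀r' : r₀ ≤ r' := by rw [hr'def]; linarith
  have hPr : ∀ y ∈ P, ‖y - x₀‖ ≤ r' := by
    intro y hy
    have h1 : ‖y - x₀‖ = Real.sqrt (‖y - x₀‖ ^ 2) := (Real.sqrt_sq (norm_nonneg _)).symm
    rw [h1]
    exact le_trans (Real.sqrt_le_sqrt (hyN y hy)) hr₀r'
  set s₀ : ℝ := 2 * ρ + 1 with hs₀def
  have hs₀pos : 0 < s₀ := by rw [hs₀def]; linarith
  -- X is contained in the cylinder
  have hXC : (X.1 : Set (Euc n)) ⊆ cylSet H r' s₀ x₀ := by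
    intro x hx
    refine (mem_cylSet_iff H hr'pos hs₀pos x₀ x).2
      ⟨projS H x - x₀, x - projS H x, H.sub_mem (projS_mem H x) hx₀H, ?_,
        sub_projS_mem_orthogonal H x, ?_, by abel⟩
    · exact hPr (projS H x) ⟨x, hx, rfl⟩
    · have h1 := norm_sub_projS_le H x
      have h2 := hXρ x hx
      rw [hs₀def]; linarith
  obtain ⟨C, hC⟩ := cylSet_exists_fullBody H hr'pos hs₀pos x₀
  have hdiaC := hcyl C r' s₀ x₀ hr'pos hs₀pos hx₀H hC
  have hsub : (dia X : Set (Euc n)) ⊆ cylSet H r' s₀ x₀ := by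
    have := hmono X C (by rw [hC]; exact hXC)
    rw [hdiaC, hC] at this
    exact this
  have hq' : q ∈ pimg H (cylSet H r' s₀ x₀) := pimg_mono H hsub hq
  have := pimg_cylSet_subset H hr'pos hs₀pos hx₀H hq'
  rw [Set.mem_setOf_eq] at this
  rw [← hddef] at this
  linarith

end Main

/-- Theorem 2, case of bodies: if `H ∈ G_{n,i}` with `1 ≤ i ≤ n−1`,
`◇ : 𝒦ⁿₙ → 𝒦ⁿ_H` is monotonic and invariant on `H`-symmetric spherical cylinders, and
there is a strictly increasing set function `F : 𝒦ⁿₙ ∪ 𝒦ⁿ_H → [0,∞)` with `F(◇K) = F(K)`,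
then `◇` is projection invariant. -/
theorem stmt9 {n i : ℕ} (hi1 : 1 ≤ i) (hin : i ≤ n - 1)
    (H : Submodule ℝ (Euc n)) (hHr : Module.finrank ℝ H = i)
    (dia : FullBody n → ConvexBody (Euc n))
    (hcod : ∀ K, SymmWrt H (dia K : Set (Euc n)))
    (hmono : ∀ K L : FullBody n,
      (K.1 : Set (Euc n)) ⊆ (L.1 : Set (Euc n)) → (dia K : Set (Euc n)) ⊆ (dia L : Set (Euc n)))
    (hcyl : ∀ (C : FullBody n) (r s : ℝ) (x : Euc n), 0 < r → 0 < s → x ∈ H →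
      (C.1 : Set (Euc n)) = cylSet H r s x → (dia C : Set (Euc n)) = (C.1 : Set (Euc n)))
    (F : ConvexBody (Euc n) → ℝ)
    (hF0 : ∀ K, InDom H K → 0 ≤ F K)
    (hFmono : ∀ K L : ConvexBody (Euc n), InDom H K → InDom H L →
      (K : Set (Euc n)) ⊂ (L : Set (Euc n)) → F K < F L)
    (hFpres : ∀ K : FullBody n, F (dia K) = F K.1) :
    ∀ K : FullBody n, pimg H (dia K : Set (Euc n)) = pimg H (K.1 : Set (Euc n)) := by
  intro K
  apply Set.Subset.antisymm (shadow_subset dia hmono hcyl K)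
  -- the reverse inclusion
  intro z hz
  by_contra hzM
  obtain ⟨k, hk, hkz⟩ := hz
  -- separate z from the shadow M of dia K
  have hMconv : Convex ℝ (pimg H (dia K : Set (Euc n))) := by
    have : pimg H (dia K : Set (Euc n)) = projL H '' (dia K : Set (Euc n)) := rfl
    rw [this]
    exact ((dia K).convex).linear_image (projL H)
  have hMcomp : IsCompact (pimg H (dia K : Set (Euc n))) :=
    ((dia K).isCompact).image (continuous_projS H)
  obtain ⟨f, u, hfu, hufz⟩ := geometric_hahn_banach_closed_point hMconv hMcomp.isClosed hzM
  set g : Euc n → ℝ := fun x => f (projS H x) with hgdef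
  have hgcont : Continuous g := f.continuous.comp (continuous_projS H)
  have hglin : IsLinearMap ℝ g := by
    constructor
    · intro a b; simp only [hgdef, projS_add, map_add]
    · intro c a
      simp only [hgdef]
      have : projS H (c • a) = c • projS H a := by
        unfold projS; rw [(Submodule.orthogonalProjection H).map_smul]; rfl
      rw [this, f.map_smul, smul_eq_mul]
  have hfz : u < f z := hufz
  set c' : ℝ := (u + f z) / 2 with hc'def
  have hc'1 : u < c' := by rw [hc'def]; linarith
  have hc'2 : c' < f z := by rw [hc'def]; linarith
  set Ws : Set (Euc n) := (K.1 : Set (Euc n)) ∩ {x | c' ≤ g x} with hWsdef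
  have hgk : g k = f z := by simp only [hgdef, hkz]
  have hkW : k ∈ Ws := ⟨hk, by rw [Set.mem_setOf_eq, hgk]; linarith⟩
  have hWconv : Convex ℝ Ws := (K.1.convex).inter (convex_halfSpace_ge hglin c')
  have hWcomp : IsCompact Ws :=
    (K.1.isCompact).inter_right (isClosed_le continuous_const hgcont)
  -- interior of Ws is nonempty
  obtain ⟨x₀, hx₀⟩ := K.2
  have hWint : (interior Ws).Nonempty := by
    set aa : ℝ := g x₀ with haadef
    set bb : ℝ := g k with hbbdef
    have hbb : c' < bb := by rw [hgk]; exact hc'2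
    set D : ℝ := |bb - aa| with hDdef
    have hD0 : 0 ≤ D := abs_nonneg _
    set τ : ℝ := min ((bb - c') / (2 * D + 2)) (1 / 2) with hτdef
    have hτpos : 0 < τ := by
      apply lt_min
      · apply div_pos (by linarith) (by linarith)
      · norm_num
    have hτhalf : τ ≤ 1 / 2 := min_le_right _ _
    set y : Euc n := τ • x₀ + (1 - τ) • k with hydef
    have hyint : y ∈ interior (K.1 : Set (Euc n)) :=
      (K.1.convex).combo_interior_closure_mem_interior hx₀ (subset_closure hk)
        hτpos (by linarith) (by ring)
    have hgy : g y = τ * aa + (1 - τ) * bb := by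
      rw [hydef, hglin.map_add, hglin.map_smul, hglin.map_smul]
      simp only [smul_eq_mul, haadef, hbbdef]
    have hgy' : c' < g y := by
      have h1 : τ ≤ (bb - c') / (2 * D + 2) := min_le_left _ _
      have h2 : τ * (bb - aa) ≤ τ * D := by
        apply mul_le_mul_of_nonneg_left (le_abs_self _) hτpos.le
      have h3 : τ * D ≤ ((bb - c') / (2 * D + 2)) * D :=
        mul_le_mul_of_nonneg_right h1 hD0
      have h4 : ((bb - c') / (2 * D + 2)) * D ≤ (bb - c') / 2 := by
        rw [div_mul_eq_mul_div, div_le_div_iff₀ (by linarith) (by norm_num)]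
        nlinarith
      rw [hgy]
      nlinarith
    have hO : interior (K.1 : Set (Euc n)) ∩ {x | c' < g x} ⊆ interior Ws := by
      apply interior_maximal
      · rintro x ⟨hx1, hx2⟩
        exact ⟨interior_subset hx1, show c' ≤ g x from le_of_lt hx2⟩
      · exact isOpen_interior.inter (isOpen_lt continuous_const hgcont)
    exact ⟨y, hO ⟨hyint, hgy'⟩⟩
  set WF : FullBody n := ⟨⟨Ws, hWconv, hWcomp, ⟨k, hkW⟩⟩, hWint⟩ with hWFdef
  have hWK : (WF.1 : Set (Euc n)) ⊆ (K.1 : Set (Euc n)) := Set.inter_subset_left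
  have hdsub : (dia WF : Set (Euc n)) ⊆ (dia K : Set (Euc n)) := hmono WF K hWK
  obtain ⟨y₁, hy₁⟩ := (dia WF).nonempty
  set q : Euc n := projS H y₁ with hqdef
  have hqM : q ∈ pimg H (dia K : Set (Euc n)) := ⟨y₁, hdsub hy₁, rfl⟩
  have hq_lt : f q < u := hfu q hqM
  have hqW : q ∈ pimg H (WF.1 : Set (Euc n)) :=
    shadow_subset dia hmono hcyl WF ⟨y₁, hy₁, rfl⟩
  obtain ⟨w', hw', hw'q⟩ := hqW
  have hge : c' ≤ g w' := hw'.2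
  have : g w' = f q := by show f (projS H w') = f q; rw [hw'q]
  linarith
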